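/- With the hypotheses of a Rokhlin system and assuming ⋃_{n∈ℤ} hⁿ(Y) = X, the complement X \ Y equals the disjoint union over l = 0,…,m and j = 1,…,r_l−1 of the sets h^j(T_l^0). -/

import Mathlib

open Set

lemma aux_min {X : Type*} {m : ℕ} (T : Fin (m+1) → Set X) {y : X}
    (hy : y ∈ ⋃ l, T l) : ∃ l, y ∈ T l \ ⋃ i, ⋃ _ : i < l, T i := by
  classical
  obtain ⟨l0, hl0⟩ := mem_iUnion.1 hy
  let S : Finset (Fin (m+1)) := Finset.univ.filter (fun l => y ∈ T l)
  have hS : S.Nonempty := ⟨l0, by simp [S, hl0]⟩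
  refine ⟨S.min' hS, ?_, ?_⟩
  · have := S.min'_mem hS; simpa [S] using this
  · intro hmem
    simp only [mem_iUnion] at hmem
    obtain ⟨i, hi, hyi⟩ := hmem
    exact absurd (S.min'_le i (by simp [S, hyi])) (not_le.2 hi)

lemma aux_fwd {X : Type*} [TopologicalSpace X] (h : X ≃ₜ X) {Y : Set X} {m : ℕ}
    (T : Fin (m+1) → Set X) (r : Fin (m+1) → ℕ)
    (hcover : (⋃ l, T l) = Y) (hrpos : ∀ l, 1 ≤ r l)
    (hret : ∀ l, (⇑h)^[r l] '' T l ⊆ Y) :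
    ∀ j : ℕ, ∀ y ∈ Y, (⇑h)^[j] y ∉ Y →
      ∃ l z, z ∈ T l \ (⋃ i, ⋃ _ : i < l, T i) ∧
        ∃ i, 1 ≤ i ∧ i < r l ∧ (⇑h)^[i] z = (⇑h)^[j] y := by
  intro j
  induction j using Nat.strong_induction_on with
  | _ j ih =>
    intro y hy hjy
    have hyU : y ∈ ⋃ l, T l := hcover.symm ▸ hy
    obtain ⟨l, hl⟩ := aux_min T hyU
    by_cases hj : j < r l
    · rcases Nat.eq_zero_or_pos j with h0 | h1
      · subst h0; exact absurd hy (by simpa using hjy)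
      · exact ⟨l, y, hl, j, h1, hj, rfl⟩
    · push_neg at hj
      have hy' : (⇑h)^[r l] y ∈ Y := hret l ⟨y, hl.1, rfl⟩
      have heq : (⇑h)^[j - r l] ((⇑h)^[r l] y) = (⇑h)^[j] y := by
        rw [← Function.iterate_add_apply]
        congr 1; omega
      have hlt : j - r l < j := by have := hrpos l; omega
      obtain ⟨l', z, hz, i, hi1, hi2, hie⟩ :=
        ih (j - r l) hlt _ hy' (heq ▸ hjy)
      exact ⟨l', z, hz, i, hi1, hi2, hie.trans heq⟩

lemma aux_K {X : Type*} [MetricSpace X] [CompactSpace X] (h : X ≃ₜ X)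
    {Y : Set X} {m : ℕ} (T : Fin (m+1) → Set X) (r : Fin (m+1) → ℕ)
    (hYrec : Y ⊆ closure (⋃ n : ℕ, ⋃ _ : 1 ≤ n, (⇑h)^[n] '' Y))
    (hTcomp : ∀ l, IsCompact (T l))
    (hcover : (⋃ l, T l) = Y) (hrpos : ∀ l, 1 ≤ r l)
    (hret : ∀ l, (⇑h)^[r l] '' T l ⊆ Y)
    (hfull : (⋃ n : ℤ, ⇑(h.toEquiv ^ n) '' Y) = Set.univ) :
    (⋃ l, ⋃ j : ℕ, ⋃ _ : j < r l, (⇑h)^[j] '' T l) = univ := by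
  set K := ⋃ l, ⋃ j : ℕ, ⋃ _ : j < r l, (⇑h)^[j] '' T l with hKdef
  have hKmem : ∀ x, x ∈ K ↔ ∃ l, ∃ j < r l, x ∈ (⇑h)^[j] '' T l := by
    intro x; simp [hKdef, mem_iUnion]
  have hYK : Y ⊆ K := by
    intro y hy
    obtain ⟨l, hl⟩ := mem_iUnion.1 (hcover.symm ▸ hy : y ∈ ⋃ l, T l)
    exact (hKmem y).2 ⟨l, 0, hrpos l, ⟨y, hl, rfl⟩⟩
  have hKcomp : IsCompact K := by
    have : ∀ l : Fin (m+1), IsCompact (⋃ j : ℕ, ⋃ _ : j < r l, (⇑h)^[j] '' T l) := by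
      intro l
      have heq : (⋃ j : ℕ, ⋃ _ : j < r l, (⇑h)^[j] '' T l)
          = ⋃ j : Fin (r l), (⇑h)^[(j : ℕ)] '' T l := by
        ext x
        simp only [mem_iUnion]
        constructor
        · rintro ⟨j, hj, hx⟩; exact ⟨⟨j, hj⟩, hx⟩
        · rintro ⟨j, hx⟩; exact ⟨j, j.2, hx⟩
      rw [heq]
      exact isCompact_iUnion fun j =>
        ((hTcomp l).image ((h.continuous.iterate (j : ℕ))))
    exact isCompact_iUnion this
  have hhK : h '' K ⊆ K := by
    rintro _ ⟨x, hx, rfl⟩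
    obtain ⟨l, j, hj, t, ht, rfl⟩ := (hKmem x).1 hx
    rcases lt_or_eq_of_le (Nat.succ_le_of_lt hj) with hj1 | hj1
    · exact (hKmem _).2 ⟨l, j+1, hj1, ⟨t, ht, Function.iterate_succ_apply' (⇑h) j t⟩⟩
    · have : h ((⇑h)^[j] t) = (⇑h)^[r l] t := by
        rw [← hj1, Function.iterate_succ_apply']
      rw [this]
      exact hYK (hret l ⟨t, ht, rfl⟩)
  have hiterY : ∀ n : ℕ, (⇑h)^[n] '' Y ⊆ K := by
    intro n
    induction n with
    | zero => simpa using hYK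
    | succ n ihn =>
      rw [Function.iterate_succ', Set.image_comp]
      exact (Set.image_mono ihn).trans hhK
  have hKh : K ⊆ h '' K := by
    have hsub2 : (⋃ n : ℕ, ⋃ _ : 1 ≤ n, (⇑h)^[n] '' Y) ⊆ h '' K := by
      intro x hx
      simp only [mem_iUnion] at hx
      obtain ⟨n, hn, hx⟩ := hx
      have hn' : n - 1 + 1 = n := by omega
      have : (⇑h)^[n] '' Y = h '' ((⇑h)^[n-1] '' Y) := by
        rw [← Set.image_comp, ← Function.iterate_succ', Nat.succ_eq_add_one, hn']
      rw [this] at hx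
      exact Set.image_mono (hiterY _) hx
    have hclosed : IsClosed (h '' K) := (hKcomp.image h.continuous).isClosed
    have hYhK : Y ⊆ h '' K := hYrec.trans (closure_minimal hsub2 hclosed)
    intro x hx
    obtain ⟨l, j, hj, t, ht, rfl⟩ := (hKmem x).1 hx
    rcases Nat.eq_zero_or_pos j with h0 | h1
    · subst h0
      exact hYhK ((hcover.symm ▸ ·) (mem_iUnion.2 ⟨l, ht⟩) : t ∈ Y)
    · have hj' : j = (j - 1) + 1 := by omega
      have : (⇑h)^[j] t = h ((⇑h)^[j-1] t) := by
        conv_lhs => rw [hj']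
        exact Function.iterate_succ_apply' (⇑h) (j-1) t
      rw [this]
      exact ⟨_, (hKmem _).2 ⟨l, j-1, by omega, ⟨t, ht, rfl⟩⟩, rfl⟩
  have hKeq : h '' K = K := le_antisymm hhK hKh
  have hsymmK : ⇑h.symm '' K = K := by
    conv_lhs => rw [← hKeq]
    rw [← Set.image_comp]
    simp
  have hinv : ∀ n : ℤ, ⇑(h.toEquiv ^ n) '' K = K := by
    intro n
    induction n using Int.induction_on with
    | zero => simp
    | succ n ihn =>
      rw [zpow_add_one, Equiv.Perm.coe_mul, Set.image_comp]
      have : ⇑h.toEquiv '' K = K := by simpa using hKeq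
      rw [this, ihn]
    | pred n ihn =>
      rw [zpow_sub_one, Equiv.Perm.coe_mul, Set.image_comp]
      have : ⇑h.toEquiv⁻¹ '' K = K := by
        have : ⇑h.toEquiv⁻¹ = ⇑h.symm := rfl
        rw [this]; exact hsymmK
      rw [this, ihn]
  apply Set.eq_univ_of_univ_subset
  rw [← hfull]
  refine Set.iUnion_subset fun n => ?_
  calc ⇑(h.toEquiv ^ n) '' Y ⊆ ⇑(h.toEquiv ^ n) '' K := Set.image_mono hYK
  _ = K := hinv n

lemma aux_disj {X : Type*} [TopologicalSpace X] (h : X ≃ₜ X) {Y : Set X} {m : ℕ}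
    (T : Fin (m+1) → Set X) (r : Fin (m+1) → ℕ)
    (hTY : ∀ l, T l ⊆ Y)
    (hfirst : ∀ l : Fin (m + 1), ∀ y ∈ T l \ ⋃ j, ⋃ _ : j < l, T j,
      ∀ n, 1 ≤ n → n < r l → (⇑h)^[n] y ∉ Y)
    {l l' : Fin (m+1)} {j j' : ℕ} (hj : j < r l) (hj' : j' < r l')
    (hne : (l, j) ≠ (l', j')) (hle : j ≤ j') :
    Disjoint ((⇑h)^[j] '' (T l \ ⋃ i, ⋃ _ : i < l, T i))
      ((⇑h)^[j'] '' (T l' \ ⋃ i, ⋃ _ : i < l', T i)) := by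
  rw [Set.disjoint_left]
  rintro _ ⟨z, hz, rfl⟩ ⟨z', hz', heq⟩
  have hinj : Function.Injective (⇑h)^[j] := h.injective.iterate j
  have hz2 : (⇑h)^[j' - j] z' = z := by
    apply hinj
    rw [← Function.iterate_add_apply]
    have : j + (j' - j) = j' := by omega
    rw [this, heq]
  rcases lt_or_eq_of_le hle with hlt | hjeq
  · have h1 : 1 ≤ j' - j := by omega
    have h2 : j' - j < r l' := by omega
    exact hfirst l' z' hz' (j' - j) h1 h2 (hz2 ▸ hTY l hz.1)
  · have hzz : z = z' := hinj (by rw [← heq, hjeq])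
    have hll : l ≠ l' := by
      intro hl; exact hne (by rw [hl, hjeq])
    rcases lt_or_gt_of_ne hll with hl | hl
    · exact hz'.2 (Set.mem_iUnion.2 ⟨l, Set.mem_iUnion.2 ⟨hl, hzz ▸ hz.1⟩⟩)
    · exact hz.2 (Set.mem_iUnion.2 ⟨l', Set.mem_iUnion.2 ⟨hl, hzz ▸ hz'.1⟩⟩)

/-- A statement about a Rokhlin system of towers for `(X, h, Y)`. -/
theorem stmt_7 {X : Type*} [MetricSpace X] [CompactSpace X] (h : X ≃ₜ X)
    (Y : Set X) (hYne : Y.Nonempty) (hYcomp : IsCompact Y)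
    (hYrec : Y ⊆ closure (⋃ n : ℕ, ⋃ _ : 1 ≤ n, (⇑h)^[n] '' Y))
    (m : ℕ) (T : Fin (m + 1) → Set X) (r : Fin (m + 1) → ℕ)
    (hTne : ∀ l, (T l).Nonempty) (hTcomp : ∀ l, IsCompact (T l))
    (hTY : ∀ l, T l ⊆ Y) (hcover : (⋃ l, T l) = Y)
    (hrpos : ∀ l, 1 ≤ r l) (hrmono : Monotone r)
    (hret : ∀ l, (⇑h)^[r l] '' T l ⊆ Y)
    (hfirst : ∀ l : Fin (m + 1), ∀ y ∈ T l \ ⋃ j, ⋃ _ : j < l, T j,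
      ∀ n, 1 ≤ n → n < r l → (⇑h)^[n] y ∉ Y)
    (hrealized : ∀ l, ∃ y ∈ Y, (⇑h)^[r l] y ∈ Y ∧
      ∀ n, 1 ≤ n → n < r l → (⇑h)^[n] y ∉ Y)
    (hfull : (⋃ n : ℤ, ⇑(h.toEquiv ^ n) '' Y) = Set.univ) :
    Set.univ \ Y
        = (⋃ l, ⋃ j : ℕ, ⋃ _ : 1 ≤ j ∧ j < r l,
            (⇑h)^[j] '' (T l \ ⋃ i, ⋃ _ : i < l, T i)) ∧
      ∀ l l' : Fin (m + 1), ∀ j j' : ℕ, j < r l → j' < r l' → (l, j) ≠ (l', j') →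
        Disjoint ((⇑h)^[j] '' (T l \ ⋃ i, ⋃ _ : i < l, T i))
          ((⇑h)^[j'] '' (T l' \ ⋃ i, ⋃ _ : i < l', T i)) := by
  constructor
  · apply Set.Subset.antisymm
    · rintro x ⟨-, hxY⟩
      have hxK : x ∈ ⋃ l, ⋃ j : ℕ, ⋃ _ : j < r l, (⇑h)^[j] '' T l := by
        rw [aux_K h T r hYrec hTcomp hcover hrpos hret hfull]
        trivial
      simp only [Set.mem_iUnion] at hxK
      obtain ⟨l, j, hj, t, ht, rfl⟩ := hxK
      obtain ⟨l', z, hz, i, hi1, hi2, hie⟩ :=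
        aux_fwd h T r hcover hrpos hret j t (hTY l ht) hxY
      simp only [Set.mem_iUnion]
      exact ⟨l', i, ⟨hi1, hi2⟩, z, hz, hie⟩
    · intro x hx
      simp only [Set.mem_iUnion] at hx
      obtain ⟨l, i, ⟨hi1, hi2⟩, z, hz, rfl⟩ := hx
      exact ⟨trivial, hfirst l z hz i hi1 hi2⟩
  · intro l l' j j' hj hj' hne
    rcases le_total j j' with hle | hle
    · exact aux_disj h T r hTY hfirst hj hj' hne hle
    · exact (aux_disj h T r hTY hfirst hj' hj (Ne.symm hne) hle).symm
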